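/- With the Krammer representation maps ρ(σ_i) defined as in Krammer's formulas on the free module with basis v_{ij} (1 ≤ i < j ≤ n), one has ρ(σ_i) ρ(σ_{i+1}) ρ(σ_i) = ρ(σ_{i+1}) ρ(σ_i) ρ(σ_{i+1}) for all 1 ≤ i ≤ n-2. -/

import Mathlib

/-- Index set for the Krammer basis: pairs `(a, b)` with `1 ≤ a < b ≤ n`. -/
def KIdx (n : ℕ) : Type := {p : ℕ × ℕ // 1 ≤ p.1 ∧ p.1 < p.2 ∧ p.2 ≤ n}

/-- The basis vector `v_{a b}` of the free module `KIdx n →₀ R`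
(zero if the indices are out of range). -/
noncomputable def kv (R : Type*) [CommRing R] (n a b : ℕ) : KIdx n →₀ R :=
  if h : 1 ≤ a ∧ a < b ∧ b ≤ n then Finsupp.single ⟨(a, b), h⟩ 1 else 0

/-- Adjacent braid relation for the Krammer representation: if `ρ i`
(for `1 ≤ i ≤ n-1`) acts on the basis `v_{ab}` by Krammer's formulas, then
`ρ i ρ (i+1) ρ i = ρ (i+1) ρ i ρ (i+1)` for all `1 ≤ i ≤ n-2`. -/
theorem stmt_4 {R : Type*} [CommRing R] (n : ℕ) (q t : R)
    (hq : IsUnit q) (ht : IsUnit t)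
    (ρ : ℕ → ((KIdx n →₀ R) →ₗ[R] (KIdx n →₀ R)))
    (hA : ∀ i, 1 ≤ i → i + 1 ≤ n →
      ρ i (kv R n i (i+1)) = (t * q ^ 2) • kv R n i (i+1))
    (hB : ∀ i a b, 1 ≤ i → i + 1 ≤ n → 1 ≤ a → a < b → b ≤ n →
      i ≠ a → i ≠ b → i + 1 ≠ a → i + 1 ≠ b → ρ i (kv R n a b) = kv R n a b)
    (hC1 : ∀ i b, 1 ≤ i → i + 1 < b → b ≤ n → ρ i (kv R n (i+1) b) = kv R n i b)
    (hC2 : ∀ i a, 1 ≤ a → a < i → i + 1 ≤ n → ρ i (kv R n a (i+1)) = kv R n a i)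
    (hD1 : ∀ i b, 1 ≤ i → i + 1 < b → b ≤ n →
      ρ i (kv R n i b) =
        (t * q * (q - 1)) • kv R n i (i+1) + (1 - q) • kv R n i b
          + q • kv R n (i+1) b)
    (hD2 : ∀ i a, 1 ≤ a → a < i → i + 1 ≤ n →
      ρ i (kv R n a i) =
        (1 - q) • kv R n a i + q • kv R n a (i+1)
          + (q * (q - 1)) • kv R n i (i+1)) :
    ∀ i, 1 ≤ i → i + 2 ≤ n →
      ρ i ∘ₗ ρ (i+1) ∘ₗ ρ i = ρ (i+1) ∘ₗ ρ i ∘ₗ ρ (i+1) := by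
  intro i hi hin
  have key : ∀ a b, 1 ≤ a → a < b → b ≤ n →
      ρ i (ρ (i+1) (ρ i (kv R n a b))) = ρ (i+1) (ρ i (ρ (i+1) (kv R n a b))) := by
    intro a b ha hab hbn
    have cA1 : ρ i (kv R n i (i+1)) = (t * q ^ 2) • kv R n i (i+1) := hA i hi (by omega)
    have cB1 : ρ i (kv R n i (i+2)) =
        (t * q * (q - 1)) • kv R n i (i+1) + (1 - q) • kv R n i (i+2)
          + q • kv R n (i+1) (i+2) := hD1 i (i+2) hi (by omega) (by omega)
    have cC1 : ρ i (kv R n (i+1) (i+2)) = kv R n i (i+2) :=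
      hC1 i (i+2) hi (by omega) (by omega)
    have cA2 : ρ (i+1) (kv R n i (i+1)) =
        (1 - q) • kv R n i (i+1) + q • kv R n i (i+2)
          + (q * (q - 1)) • kv R n (i+1) (i+2) := hD2 (i+1) i hi (by omega) (by omega)
    have cB2 : ρ (i+1) (kv R n i (i+2)) = kv R n i (i+1) :=
      hC2 (i+1) i hi (by omega) (by omega)
    have cC2 : ρ (i+1) (kv R n (i+1) (i+2)) = (t * q ^ 2) • kv R n (i+1) (i+2) :=
      hA (i+1) (by omega) (by omega)
    by_cases h1 : b < i ∨ i + 2 < a ∨ (a < i ∧ i + 2 < b)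
    · have f1 : ρ i (kv R n a b) = kv R n a b :=
        hB i a b hi (by omega) ha hab hbn (by omega) (by omega) (by omega) (by omega)
      have f2 : ρ (i+1) (kv R n a b) = kv R n a b :=
        hB (i+1) a b (by omega) (by omega) ha hab hbn (by omega) (by omega) (by omega)
          (by omega)
      simp only [f1, f2]
    · have hcase : (a < i ∧ (b = i ∨ b = i + 1 ∨ b = i + 2)) ∨
          ((a = i ∧ b = i + 1) ∨ (a = i ∧ b = i + 2) ∨ (a = i + 1 ∧ b = i + 2)) ∨
          ((a = i ∨ a = i + 1 ∨ a = i + 2) ∧ i + 2 < b) := by omega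
      rcases hcase with ⟨hai, hb⟩ | (⟨rfl, rfl⟩ | ⟨rfl, rfl⟩ | ⟨rfl, rfl⟩) | ⟨hacase, hbb⟩
      · -- left block : a < i, b ∈ {i, i+1, i+2}
        have lA1 : ρ i (kv R n a i) =
            (1 - q) • kv R n a i + q • kv R n a (i+1)
              + (q * (q - 1)) • kv R n i (i+1) := hD2 i a ha hai (by omega)
        have lB1 : ρ i (kv R n a (i+1)) = kv R n a i := hC2 i a ha hai (by omega)
        have lC1 : ρ i (kv R n a (i+2)) = kv R n a (i+2) :=
          hB i a (i+2) hi (by omega) ha (by omega) (by omega) (by omega) (by omega)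
            (by omega) (by omega)
        have lA2 : ρ (i+1) (kv R n a i) = kv R n a i :=
          hB (i+1) a i (by omega) (by omega) ha hai (by omega) (by omega) (by omega)
            (by omega) (by omega)
        have lB2 : ρ (i+1) (kv R n a (i+1)) =
            (1 - q) • kv R n a (i+1) + q • kv R n a (i+2)
              + (q * (q - 1)) • kv R n (i+1) (i+2) := hD2 (i+1) a ha (by omega) (by omega)
        have lC2 : ρ (i+1) (kv R n a (i+2)) = kv R n a (i+1) :=
          hC2 (i+1) a ha (by omega) (by omega)
        rcases hb with rfl | rfl | rfl
        · simp only [map_add, map_smul, lA1, lB1, lC1, lA2, lB2, lC2, cA1, cB1, cC1,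
            cA2, cB2, cC2]
          try module
        · simp only [map_add, map_smul, lA1, lB1, lC1, lA2, lB2, lC2, cA1, cB1, cC1,
            cA2, cB2, cC2]
          try module
        · simp only [map_add, map_smul, lA1, lB1, lC1, lA2, lB2, lC2, cA1, cB1, cC1,
            cA2, cB2, cC2]
          try module
      · -- core : (i, i+1)
        simp only [map_add, map_smul, cA1, cB1, cC1, cA2, cB2, cC2]
        try module
      · -- core : (i, i+2)
        simp only [map_add, map_smul, cA1, cB1, cC1, cA2, cB2, cC2]
        try module
      · -- core : (i+1, i+2)
        simp only [map_add, map_smul, cA1, cB1, cC1, cA2, cB2, cC2]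
        try module
      · -- right block : a ∈ {i, i+1, i+2}, b > i+2
        have rA1 : ρ i (kv R n i b) =
            (t * q * (q - 1)) • kv R n i (i+1) + (1 - q) • kv R n i b
              + q • kv R n (i+1) b := hD1 i b hi (by omega) hbn
        have rB1 : ρ i (kv R n (i+1) b) = kv R n i b := hC1 i b hi (by omega) hbn
        have rC1 : ρ i (kv R n (i+2) b) = kv R n (i+2) b :=
          hB i (i+2) b hi (by omega) (by omega) (by omega) hbn (by omega) (by omega)
            (by omega) (by omega)
        have rA2 : ρ (i+1) (kv R n i b) = kv R n i b :=
          hB (i+1) i b (by omega) (by omega) hi (by omega) hbn (by omega) (by omega)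
            (by omega) (by omega)
        have rB2 : ρ (i+1) (kv R n (i+1) b) =
            (t * q * (q - 1)) • kv R n (i+1) (i+2) + (1 - q) • kv R n (i+1) b
              + q • kv R n (i+2) b := hD1 (i+1) b (by omega) (by omega) hbn
        have rC2 : ρ (i+1) (kv R n (i+2) b) = kv R n (i+1) b :=
          hC1 (i+1) b (by omega) (by omega) hbn
        rcases hacase with rfl | rfl | rfl
        · simp only [map_add, map_smul, rA1, rB1, rC1, rA2, rB2, rC2, cA1, cB1, cC1,
            cA2, cB2, cC2]
          try module
        · simp only [map_add, map_smul, rA1, rB1, rC1, rA2, rB2, rC2, cA1, cB1, cC1,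
            cA2, cB2, cC2]
          try module
        · simp only [map_add, map_smul, rA1, rB1, rC1, rA2, rB2, rC2, cA1, cB1, cC1,
            cA2, cB2, cC2]
          try module
  apply Finsupp.lhom_ext
  rintro ⟨⟨a, b⟩, ha, hab, hbn⟩ r
  have hs : (Finsupp.single (⟨(a, b), ⟨ha, hab, hbn⟩⟩ : KIdx n) r) = r • kv R n a b := by
    rw [show kv R n a b = Finsupp.single (⟨(a, b), ⟨ha, hab, hbn⟩⟩ : KIdx n) 1 from
      dif_pos _]
    exact (Finsupp.smul_single_one _ r).symm
  simp only [LinearMap.comp_apply, hs, map_smul]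
  erw [hs]
  simp only [map_smul]
  exact congrArg _ (key a b ha hab hbn)
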